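/- For arbitrary n the following two set equalities hold: (𝒢^{(0)×} ∪ 𝒢^{(1)×}) Λ_r^{(0)×} = 𝒢^{(0)×} ∪ 𝒢^{(1)×}, and (𝒢^{(0)×} ∪ 𝒢^{(1)×}) (Λ_r^{(0)} + 𝒢^n)^× = (𝒢^{(0)×} ∪ 𝒢^{(1)×}) (𝒢^0 + 𝒢^n)^×. -/

import Mathlib

open Pointwise

noncomputable section

namespace ClGA

variable (𝔽 : Type*) [RCLike 𝔽] (p q r : ℕ)

/-- The diagonal weights: `p` ones, `q` minus-ones, `r` zeros. -/
def w : Fin (p + q + r) → 𝔽 := fun i =>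
  if (i : ℕ) < p then 1 else if (i : ℕ) < p + q then -1 else 0

/-- The quadratic form on `𝔽^n` whose Gram matrix is `diag(1,…,1,−1,…,−1,0,…,0)`. -/
def Q : QuadraticForm 𝔽 (Fin (p + q + r) → 𝔽) :=
  QuadraticMap.weightedSumSquares 𝔽 (w 𝔽 p q r)

/-- The degenerate Clifford geometric algebra `𝒢 = 𝒢_{p,q,r}`. -/
abbrev G := CliffordAlgebra (Q 𝔽 p q r)

/-- The generators `e_a`, `a = 1, …, n`. -/
def e (a : Fin (p + q + r)) : G 𝔽 p q r :=
  CliffordAlgebra.ι (Q 𝔽 p q r) (Pi.single a 1)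

/-- The even subspace `𝒢^{(0)}`: the `+1`-eigenspace of the grade involution. -/
def Geven : Submodule 𝔽 (G 𝔽 p q r) where
  carrier := {x | CliffordAlgebra.involute x = x}
  add_mem' := by
    intro a b ha hb
    simp only [Set.mem_setOf_eq, map_add] at ha hb ⊢
    rw [ha, hb]
  zero_mem' := by simp
  smul_mem' := by
    intro c x hx
    simp only [Set.mem_setOf_eq, map_smul] at hx ⊢
    rw [hx]

/-- The odd subspace `𝒢^{(1)}`: the `−1`-eigenspace of the grade involution. -/
def Godd : Submodule 𝔽 (G 𝔽 p q r) where
  carrier := {x | CliffordAlgebra.involute x = -x}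
  add_mem' := by
    intro a b ha hb
    simp only [Set.mem_setOf_eq, map_add] at ha hb ⊢
    rw [ha, hb, neg_add]
  zero_mem' := by simp
  smul_mem' := by
    intro c x hx
    simp only [Set.mem_setOf_eq, map_smul] at hx ⊢
    rw [hx, smul_neg]

/-- The grade-1 subspace `𝒢^1`, the span of the generators. -/
def G1 : Submodule 𝔽 (G 𝔽 p q r) := Submodule.span 𝔽 (Set.range (e 𝔽 p q r))

/-- The scalar (grade-0) subspace `𝒢^0 = 𝔽·1`. -/
def G0 : Submodule 𝔽 (G 𝔽 p q r) := Submodule.span 𝔽 {(1 : G 𝔽 p q r)}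

/-- The element `e_{1…n} = e_1 e_2 ⋯ e_n`. -/
def eTop : G 𝔽 p q r := (List.ofFn (e 𝔽 p q r)).prod

/-- The grade-`n` subspace `𝒢^n = 𝔽·e_{1…n}`. -/
def Gn : Submodule 𝔽 (G 𝔽 p q r) := Submodule.span 𝔽 {eTop 𝔽 p q r}

/-- The Grassmann subalgebra `Λ_r` generated by the null generators. -/
def Λr : Subalgebra 𝔽 (G 𝔽 p q r) :=
  Algebra.adjoin 𝔽 {x | ∃ a : Fin (p + q + r), p + q ≤ (a : ℕ) ∧ x = e 𝔽 p q r a}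

/-- `Λ_r` viewed as a subspace of `𝒢`. -/
def Λrs : Submodule 𝔽 (G 𝔽 p q r) := Subalgebra.toSubmodule (Λr 𝔽 p q r)

/-- The even part `Λ_r^{(0)} = Λ_r ∩ 𝒢^{(0)}`. -/
def Λr0 : Submodule 𝔽 (G 𝔽 p q r) := Λrs 𝔽 p q r ⊓ Geven 𝔽 p q r

/-- The Jacobson radical `rad 𝒢` of `𝒢`: the two-sided ideal generated by the
null generators. -/
def radG : Submodule 𝔽 (G 𝔽 p q r) :=
  Submodule.span 𝔽 {x | ∃ (u v : G 𝔽 p q r) (a : Fin (p + q + r)),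
    p + q ≤ (a : ℕ) ∧ x = u * e 𝔽 p q r a * v}

/-- `rad 𝒢^{(0)} = rad 𝒢 ∩ 𝒢^{(0)}`. -/
def radG0 : Submodule 𝔽 (G 𝔽 p q r) := radG 𝔽 p q r ⊓ Geven 𝔽 p q r

/-- For a subset `S ⊆ 𝒢`, `S^×` denotes those elements of `S` invertible in `𝒢`. -/
def ux (S : Set (G 𝔽 p q r)) : Set (G 𝔽 p q r) := {x ∈ S | IsUnit x}

/-- `𝒢^{(0)×} ∪ 𝒢^{(1)×}` (the group `P^±_{p,q,r}`). -/
def Epm : Set (G 𝔽 p q r) :=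
  ux 𝔽 p q r ↑(Geven 𝔽 p q r) ∪ ux 𝔽 p q r ↑(Godd 𝔽 p q r)

/-- `(T⁻¹)^̂ · T`, the grade involution of the inverse times `T`. -/
def tw (T : G 𝔽 p q r) : G 𝔽 p q r :=
  CliffordAlgebra.involute (Ring.inverse T) * T

/-- The invertible elements `T` with `T W T⁻¹ ⊆ W` (adjoint representation). -/
def gammaAd (W : Submodule 𝔽 (G 𝔽 p q r)) : Set (G 𝔽 p q r) :=
  {T | IsUnit T ∧ ∀ U ∈ W, T * U * Ring.inverse T ∈ W}

/-- The invertible elements `T` with `T̂ W T⁻¹ ⊆ W` (twisted adjoint representation). -/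
def gammaTw (W : Submodule 𝔽 (G 𝔽 p q r)) : Set (G 𝔽 p q r) :=
  {T | IsUnit T ∧ ∀ U ∈ W, CliffordAlgebra.involute T * U * Ring.inverse T ∈ W}


/-! ### Auxiliary lemmas -/

section Aux

variable {𝔽 p q r}

lemma Q_single (a : Fin (p + q + r)) : Q 𝔽 p q r (Pi.single a 1) = w 𝔽 p q r a := by
  classical
  simp only [Q, QuadraticMap.weightedSumSquares_apply]
  rw [Finset.sum_eq_single a]
  · simp
  · intro b _ hb
    simp [Pi.single_apply, hb]
  · simp

lemma e_sq (a : Fin (p + q + r)) :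
    e 𝔽 p q r a * e 𝔽 p q r a = algebraMap 𝔽 _ (w 𝔽 p q r a) := by
  rw [e, CliffordAlgebra.ι_sq_scalar, Q_single]

lemma e_null_sq {a : Fin (p + q + r)} (ha : p + q ≤ (a : ℕ)) :
    e 𝔽 p q r a * e 𝔽 p q r a = 0 := by
  rw [e_sq]
  have hw : w 𝔽 p q r a = 0 := by
    unfold w
    split_ifs with h1 h2
    · exact absurd h1 (by omega)
    · exact absurd h2 (by omega)
    · rfl
  rw [hw, map_zero]

lemma e_anticomm {a b : Fin (p + q + r)} (hab : a ≠ b) :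
    e 𝔽 p q r a * e 𝔽 p q r b = -(e 𝔽 p q r b * e 𝔽 p q r a) := by
  classical
  have h : e 𝔽 p q r a * e 𝔽 p q r b + e 𝔽 p q r b * e 𝔽 p q r a
      = algebraMap 𝔽 _ (QuadraticMap.polar (Q 𝔽 p q r) (Pi.single a 1) (Pi.single b 1)) :=
    CliffordAlgebra.ι_mul_ι_add_swap _ _
  have hp : QuadraticMap.polar (Q 𝔽 p q r) (Pi.single a 1) (Pi.single b 1) = 0 := by
    simp only [QuadraticMap.polar, Q, QuadraticMap.weightedSumSquares_apply]
    rw [← Finset.sum_sub_distrib, ← Finset.sum_sub_distrib]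
    apply Finset.sum_eq_zero
    intro i _
    simp only [Pi.add_apply, Pi.single_apply, smul_eq_mul]
    split_ifs with h1 h2
    · exact absurd (h1.symm.trans h2) hab
    all_goals ring
  rw [hp, map_zero] at h
  exact eq_neg_of_add_eq_zero_left h

lemma e_mul_prod_eq_zero {a : Fin (p + q + r)} (ha : p + q ≤ (a : ℕ)) :
    ∀ L : List (Fin (p + q + r)), a ∈ L →
      e 𝔽 p q r a * (L.map (e 𝔽 p q r)).prod = 0
  | [], h => by simp at h
  | b :: L, h => by
    rcases eq_or_ne a b with rfl | hab
    · rw [List.map_cons, List.prod_cons, ← mul_assoc, e_null_sq ha, zero_mul]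
    · have haL : a ∈ L := by
        rcases List.mem_cons.mp h with h' | h'
        · exact absurd h' hab
        · exact h'
      rw [List.map_cons, List.prod_cons, ← mul_assoc, e_anticomm hab, neg_mul, mul_assoc,
        e_mul_prod_eq_zero ha L haL, mul_zero, neg_zero]

lemma prod_mul_e_of_not_mem {a : Fin (p + q + r)} :
    ∀ L : List (Fin (p + q + r)), a ∉ L →
      (L.map (e 𝔽 p q r)).prod * e 𝔽 p q r a
        = ((-1 : 𝔽) ^ L.length) • (e 𝔽 p q r a * (L.map (e 𝔽 p q r)).prod)
  | [], _ => by simp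
  | b :: L, h => by
    have hba : b ≠ a := fun hh => h (hh ▸ List.mem_cons_self (a := b) (l := L))
    have haL : a ∉ L := fun hh => h (List.mem_cons_of_mem _ hh)
    rw [List.map_cons, List.prod_cons, mul_assoc, prod_mul_e_of_not_mem L haL,
      mul_smul_comm, ← mul_assoc, e_anticomm hba, neg_mul, mul_assoc, smul_neg,
      List.length_cons, pow_succ, mul_neg_one, neg_smul]

lemma prod_mul_e_eq_zero {a : Fin (p + q + r)} (ha : p + q ≤ (a : ℕ)) :
    ∀ L : List (Fin (p + q + r)), a ∈ L →
      (L.map (e 𝔽 p q r)).prod * e 𝔽 p q r a = 0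
  | [], h => by simp at h
  | b :: L, h => by
    by_cases haL : a ∈ L
    · rw [List.map_cons, List.prod_cons, mul_assoc, prod_mul_e_eq_zero ha L haL, mul_zero]
    · have hab : a = b := by
        rcases List.mem_cons.mp h with h' | h'
        · exact h'
        · exact absurd h' haL
      subst hab
      rw [List.map_cons, List.prod_cons, mul_assoc, prod_mul_e_of_not_mem L haL,
        mul_smul_comm, ← mul_assoc, e_null_sq ha, zero_mul, smul_zero]

lemma eTop_eq : eTop 𝔽 p q r = ((List.finRange (p + q + r)).map (e 𝔽 p q r)).prod := by
  rw [eTop, List.ofFn_eq_map]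

lemma e_mul_eTop {a : Fin (p + q + r)} (ha : p + q ≤ (a : ℕ)) :
    e 𝔽 p q r a * eTop 𝔽 p q r = 0 := by
  rw [eTop_eq]; exact e_mul_prod_eq_zero ha _ (List.mem_finRange a)

lemma eTop_mul_e {a : Fin (p + q + r)} (ha : p + q ≤ (a : ℕ)) :
    eTop 𝔽 p q r * e 𝔽 p q r a = 0 := by
  rw [eTop_eq]; exact prod_mul_e_eq_zero ha _ (List.mem_finRange a)

lemma e_mul_prod_mul_eTop {a : Fin (p + q + r)} (ha : p + q ≤ (a : ℕ)) :
    ∀ M : List (Fin (p + q + r)), (∀ b ∈ M, p + q ≤ (b : ℕ)) →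
      (e 𝔽 p q r a * (M.map (e 𝔽 p q r)).prod) * eTop 𝔽 p q r = 0
  | [], _ => by rw [List.map_nil, List.prod_nil, mul_one, e_mul_eTop ha]
  | b :: M, hM => by
    rw [List.map_cons, List.prod_cons, mul_assoc,
      e_mul_prod_mul_eTop (hM b (List.mem_cons_self (a := b) (l := M))) M
        (fun c hc => hM c (List.mem_cons_of_mem _ hc)), mul_zero]

lemma eTop_sq (hr : 1 ≤ r) : eTop 𝔽 p q r * eTop 𝔽 p q r = 0 := by
  set a : Fin (p + q + r) := ⟨p + q, by omega⟩ with ha_def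
  have ha : p + q ≤ (a : ℕ) := le_refl _
  obtain ⟨L1, L2, hsplit⟩ := List.append_of_mem (List.mem_finRange a)
  have hpw : (L1 ++ a :: L2).Pairwise (· < ·) := hsplit ▸ List.pairwise_lt_finRange _
  have hL2 : ∀ b ∈ L2, p + q ≤ (b : ℕ) := by
    intro b hb
    have hab : a < b := (List.pairwise_cons.mp (List.pairwise_append.mp hpw).2.1).1 b hb
    exact le_of_lt (Fin.lt_def.mp hab)
  have heTop : eTop 𝔽 p q r
      = (L1.map (e 𝔽 p q r)).prod * (e 𝔽 p q r a * (L2.map (e 𝔽 p q r)).prod) := by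
    rw [eTop_eq, hsplit, List.map_append, List.prod_append, List.map_cons, List.prod_cons]
  nth_rewrite 1 [heTop]
  rw [mul_assoc, e_mul_prod_mul_eTop ha L2 hL2, mul_zero]

/-- Products of nonempty lists of null generators. -/
def S1 : Set (G 𝔽 p q r) :=
  {x | ∃ L : List (Fin (p + q + r)), L ≠ [] ∧ (∀ a ∈ L, p + q ≤ (a : ℕ)) ∧
    x = (L.map (e 𝔽 p q r)).prod}

/-- The span of such products: the "augmentation ideal" of `Λ_r`. -/
def Wnil : Submodule 𝔽 (G 𝔽 p q r) := Submodule.span 𝔽 (S1 (𝔽 := 𝔽) (p := p) (q := q) (r := r))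

lemma S1_mul_eTop {x : G 𝔽 p q r} (hx : x ∈ S1) : x * eTop 𝔽 p q r = 0 := by
  obtain ⟨L, hne, hnull, rfl⟩ := hx
  obtain ⟨b, M, rfl⟩ := List.exists_cons_of_ne_nil hne
  rw [List.map_cons, List.prod_cons]
  exact e_mul_prod_mul_eTop (hnull b (List.mem_cons_self (a := b) (l := M))) M
    (fun c hc => hnull c (List.mem_cons_of_mem _ hc))

lemma eTop_mul_S1 {x : G 𝔽 p q r} (hx : x ∈ S1) : eTop 𝔽 p q r * x = 0 := by
  obtain ⟨L, hne, hnull, rfl⟩ := hx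
  obtain ⟨b, M, rfl⟩ := List.exists_cons_of_ne_nil hne
  rw [List.map_cons, List.prod_cons, ← mul_assoc,
    eTop_mul_e (hnull b (List.mem_cons_self (a := b) (l := M))), zero_mul]

lemma Wnil_mul_eTop {x : G 𝔽 p q r} (hx : x ∈ Wnil) : x * eTop 𝔽 p q r = 0 := by
  have hle : Wnil (𝔽 := 𝔽) (p := p) (q := q) (r := r)
      ≤ LinearMap.ker (LinearMap.mulRight 𝔽 (eTop 𝔽 p q r)) := by
    rw [Wnil, Submodule.span_le]
    intro y hy
    simpa [LinearMap.mem_ker] using S1_mul_eTop hy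
  simpa using hle hx

lemma eTop_mul_Wnil {x : G 𝔽 p q r} (hx : x ∈ Wnil) : eTop 𝔽 p q r * x = 0 := by
  have hle : Wnil (𝔽 := 𝔽) (p := p) (q := q) (r := r)
      ≤ LinearMap.ker (LinearMap.mulLeft 𝔽 (eTop 𝔽 p q r)) := by
    rw [Wnil, Submodule.span_le]
    intro y hy
    simpa [LinearMap.mem_ker] using eTop_mul_S1 hy
  simpa using hle hx

lemma dup_prod_zero :
    ∀ L : List (Fin (p + q + r)), (∀ a ∈ L, p + q ≤ (a : ℕ)) → ¬ L.Nodup →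
      (L.map (e 𝔽 p q r)).prod = 0
  | [], _, hnd => absurd List.nodup_nil hnd
  | b :: L, hnull, hnd => by
    by_cases hbL : b ∈ L
    · rw [List.map_cons, List.prod_cons,
        e_mul_prod_eq_zero (hnull b (List.mem_cons_self (a := b) (l := L))) L hbL]
    · have hnd' : ¬ L.Nodup := by
        intro h
        exact hnd (List.nodup_cons.mpr ⟨hbL, h⟩)
      rw [List.map_cons, List.prod_cons,
        dup_prod_zero L (fun c hc => hnull c (List.mem_cons_of_mem _ hc)) hnd', mul_zero]

lemma card_null_finset :
    (Finset.univ.filter (fun i : Fin (p + q + r) => p + q ≤ (i : ℕ))).card = r := by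
  classical
  have himg : Finset.univ.filter (fun i : Fin (p + q + r) => p + q ≤ (i : ℕ))
      = Finset.image (fun j : Fin r => (⟨p + q + (j : ℕ), by omega⟩ : Fin (p + q + r)))
          Finset.univ := by
    ext i
    simp only [Finset.mem_filter, Finset.mem_univ, true_and, Finset.mem_image]
    constructor
    · intro hi
      refine ⟨⟨(i : ℕ) - (p + q), by omega⟩, ?_⟩
      apply Fin.ext
      simp only []
      omega
    · rintro ⟨j, rfl⟩
      exact Nat.le_add_right _ _
  rw [himg, Finset.card_image_of_injective _ ?_, Finset.card_univ, Fintype.card_fin]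
  intro j1 j2 h
  have := congrArg Fin.val h
  simp only [] at this
  exact Fin.ext (by omega)

lemma long_prod_zero (L : List (Fin (p + q + r))) (hnull : ∀ a ∈ L, p + q ≤ (a : ℕ))
    (hlen : r + 1 ≤ L.length) : (L.map (e 𝔽 p q r)).prod = 0 := by
  classical
  by_cases hnd : L.Nodup
  · exfalso
    have h1 : L.toFinset.card = L.length := List.toFinset_card_of_nodup hnd
    have h2 : L.toFinset ⊆ Finset.univ.filter (fun i : Fin (p + q + r) => p + q ≤ (i : ℕ)) := by
      intro i hi
      simp only [Finset.mem_filter, Finset.mem_univ, true_and]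
      exact hnull i (List.mem_toFinset.mp hi)
    have := Finset.card_le_card h2
    rw [h1, card_null_finset] at this
    omega
  · exact dup_prod_zero L hnull hnd

lemma mem_S1_pow :
    ∀ (k : ℕ) (x : G 𝔽 p q r), x ∈ (S1 (𝔽 := 𝔽) (p := p) (q := q) (r := r)) ^ k →
      ∃ L : List (Fin (p + q + r)), k ≤ L.length ∧ (∀ a ∈ L, p + q ≤ (a : ℕ)) ∧
        x = (L.map (e 𝔽 p q r)).prod
  | 0, x, hx => by
    refine ⟨[], by simp, by simp, ?_⟩
    rw [pow_zero, Set.mem_one] at hx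
    simp [hx]
  | (k + 1), x, hx => by
    rw [pow_succ, Set.mem_mul] at hx
    obtain ⟨y, hy, z, hz, rfl⟩ := hx
    obtain ⟨L1, hlen1, hnull1, rfl⟩ := mem_S1_pow k y hy
    obtain ⟨L2, hne2, hnull2, rfl⟩ := hz
    refine ⟨L1 ++ L2, ?_, ?_, ?_⟩
    · rw [List.length_append]
      have : 1 ≤ L2.length := List.length_pos_iff.mpr hne2
      omega
    · intro a ha
      rcases List.mem_append.mp ha with h | h
      · exact hnull1 a h
      · exact hnull2 a h
    · rw [List.map_append, List.prod_append]

lemma Wnil_pow_eq_bot :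
    (Wnil (𝔽 := 𝔽) (p := p) (q := q) (r := r)) ^ (r + 1) = ⊥ := by
  show (Submodule.span 𝔽 (S1 (𝔽 := 𝔽) (p := p) (q := q) (r := r))) ^ (r + 1) = ⊥
  rw [Submodule.span_pow, Submodule.span_eq_bot]
  intro x hx
  obtain ⟨L, hlen, hnull, rfl⟩ := mem_S1_pow (r + 1) x hx
  exact long_prod_zero L hnull hlen

lemma Wnil_nilpotent {x : G 𝔽 p q r} (hx : x ∈ Wnil) : x ^ (r + 1) = 0 := by
  have h2 := Submodule.pow_mem_pow (M := Wnil (𝔽 := 𝔽) (p := p) (q := q) (r := r)) hx (r + 1)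
  rw [Wnil_pow_eq_bot] at h2
  simpa using h2

lemma exists_decomp {u : G 𝔽 p q r} (hu : u ∈ Λrs 𝔽 p q r) :
    ∃ (c : 𝔽) (x : G 𝔽 p q r), x ∈ Wnil ∧ u = algebraMap 𝔽 _ c + x := by
  have hu' : u ∈ Submodule.span 𝔽
      (Submonoid.closure {x | ∃ a : Fin (p + q + r), p + q ≤ (a : ℕ) ∧ x = e 𝔽 p q r a}
        : Set (G 𝔽 p q r)) := by
    rw [← Algebra.adjoin_eq_span]
    exact hu
  have hle : Submodule.span 𝔽
      (Submonoid.closure {x | ∃ a : Fin (p + q + r), p + q ≤ (a : ℕ) ∧ x = e 𝔽 p q r a}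
        : Set (G 𝔽 p q r))
      ≤ G0 𝔽 p q r ⊔ Wnil := by
    rw [Submodule.span_le]
    intro x hx
    obtain ⟨L, hL, rfl⟩ := Submonoid.exists_list_of_mem_closure hx
    -- turn L into an index list
    have : ∃ I : List (Fin (p + q + r)), (∀ a ∈ I, p + q ≤ (a : ℕ)) ∧
        L = I.map (e 𝔽 p q r) := by
      clear hx
      induction L with
      | nil => exact ⟨[], by simp, by simp⟩
      | cons z M ih =>
        obtain ⟨a, ha, rfl⟩ := hL z (List.mem_cons_self (a := z) (l := M))
        obtain ⟨I, hI, rfl⟩ := ih (fun y hy => hL y (List.mem_cons_of_mem _ hy))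
        refine ⟨a :: I, ?_, by simp⟩
        intro b hb
        rcases List.mem_cons.mp hb with rfl | h
        · exact ha
        · exact hI b h
    obtain ⟨I, hI, rfl⟩ := this
    rcases List.eq_nil_or_concat I with rfl | _
    · apply Submodule.mem_sup_left
      simp only [List.map_nil, List.prod_nil, SetLike.mem_coe]
      exact Submodule.mem_span_singleton_self _
    · have hIne : I ≠ [] := by
        rename_i h
        obtain ⟨M, b, rfl⟩ := h
        simp
      apply Submodule.mem_sup_right
      exact Submodule.subset_span ⟨I, hIne, hI, rfl⟩
  have := hle hu'
  rw [Submodule.mem_sup] at this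
  obtain ⟨g, hg, x, hx, rfl⟩ := this
  rw [G0, Submodule.mem_span_singleton] at hg
  obtain ⟨c, rfl⟩ := hg
  exact ⟨c, x, hx, by rw [Algebra.algebraMap_eq_smul_one]⟩

lemma mem_Geven_iff {x : G 𝔽 p q r} :
    x ∈ Geven 𝔽 p q r ↔ CliffordAlgebra.involute x = x := Iff.rfl

lemma Epm_def {x : G 𝔽 p q r} :
    x ∈ Epm 𝔽 p q r ↔
      (CliffordAlgebra.involute x = x ∨ CliffordAlgebra.involute x = -x) ∧ IsUnit x := by
  constructor
  · rintro (⟨h1, h2⟩ | ⟨h1, h2⟩)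
    exacts [⟨Or.inl h1, h2⟩, ⟨Or.inr h1, h2⟩]
  · rintro ⟨h1 | h1, h2⟩
    exacts [Or.inl ⟨h1, h2⟩, Or.inr ⟨h1, h2⟩]

lemma Epm_mul {x y : G 𝔽 p q r} (hx : x ∈ Epm 𝔽 p q r) (hy : y ∈ Epm 𝔽 p q r) :
    x * y ∈ Epm 𝔽 p q r := by
  rw [Epm_def] at hx hy ⊢
  refine ⟨?_, hx.2.mul hy.2⟩
  rcases hx.1 with h1 | h1 <;> rcases hy.1 with h2 | h2 <;>
    simp only [map_mul, h1, h2, mul_neg, neg_mul, neg_neg] <;> tauto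

lemma one_mem_Λr0 : (1 : G 𝔽 p q r) ∈ Λr0 𝔽 p q r := by
  rw [Λr0, Submodule.mem_inf]
  exact ⟨Subalgebra.one_mem _, map_one _⟩

lemma G0_le_Λr0 : G0 𝔽 p q r ≤ Λr0 𝔽 p q r := by
  rw [G0, Submodule.span_le, Set.singleton_subset_iff]
  exact one_mem_Λr0

lemma ux_mono {S T : Set (G 𝔽 p q r)} (h : S ⊆ T) : ux 𝔽 p q r S ⊆ ux 𝔽 p q r T :=
  fun x hx => ⟨h hx.1, hx.2⟩

lemma G0_le_Geven : G0 𝔽 p q r ≤ Geven 𝔽 p q r := by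
  rw [G0, Submodule.span_le, Set.singleton_subset_iff]
  exact map_one _

lemma Λr0_eq_G0_of_r_eq_zero (hr : r = 0) : Λr0 𝔽 p q r = G0 𝔽 p q r := by
  subst hr
  have hgens : {x | ∃ a : Fin (p + q + 0), p + q ≤ (a : ℕ) ∧ x = e 𝔽 p q 0 a}
      = (∅ : Set (G 𝔽 p q 0)) := by
    ext x
    simp only [Set.mem_setOf_eq, Set.mem_empty_iff_false, iff_false]
    rintro ⟨a, ha, -⟩
    have := a.isLt
    omega
  have hΛ : Λrs 𝔽 p q 0 = G0 𝔽 p q 0 := by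
    rw [Λrs, Λr, hgens, Algebra.adjoin_empty, Algebra.toSubmodule_bot, Submodule.one_eq_span, G0]
  rw [Λr0, hΛ, inf_eq_left]
  exact G0_le_Geven

/-- The core decomposition lemma: an invertible element of `Λ_r^{(0)} + 𝒢^n`
(for `r ≥ 1`) factors as an even unit times an invertible element of `𝒢^0 + 𝒢^n`. -/
lemma core_decomp (hr : 1 ≤ r) {T : G 𝔽 p q r} (hTu : IsUnit T)
    (hTm : T ∈ Λr0 𝔽 p q r ⊔ Gn 𝔽 p q r) :
    ∃ E s : G 𝔽 p q r, E ∈ Epm 𝔽 p q r ∧ s ∈ ux 𝔽 p q r ↑(G0 𝔽 p q r ⊔ Gn 𝔽 p q r) ∧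
      T = E * s := by
  obtain ⟨u, hu, g, hg, rfl⟩ := Submodule.mem_sup.mp hTm
  rw [Gn, Submodule.mem_span_singleton] at hg
  obtain ⟨μ, rfl⟩ := hg
  rw [Λr0, Submodule.mem_inf] at hu
  obtain ⟨hu1, hu2⟩ := hu
  obtain ⟨c, x, hx, rfl⟩ := exists_decomp hu1
  have hxe : x * eTop 𝔽 p q r = 0 := Wnil_mul_eTop hx
  have hex : eTop 𝔽 p q r * x = 0 := eTop_mul_Wnil hx
  have hee : eTop 𝔽 p q r * eTop 𝔽 p q r = 0 := eTop_sq hr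
  have hnt : Nontrivial (G 𝔽 p q r) := by infer_instance
  by_cases hc : c = 0
  · exfalso
    subst hc
    rw [map_zero, zero_add] at hTu
    set T := x + μ • eTop 𝔽 p q r with hT
    have hsq : T * T = x * x := by
      rw [hT, add_mul, mul_add, mul_add, mul_smul_comm, hxe, smul_zero,
        smul_mul_assoc, hex, smul_zero, smul_mul_assoc, mul_smul_comm, hee,
        smul_zero, smul_zero, add_zero, add_zero, add_zero]
    have hxn : x ^ (r + 1) = 0 := Wnil_nilpotent hx
    have hTn : T ^ (2 * (r + 1)) = 0 := by
      have h1 : T ^ (2 * (r + 1)) = (T * T) ^ (r + 1) := by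
        rw [← pow_two, ← pow_mul]
      rw [h1, hsq, ← pow_two, ← pow_mul, mul_comm 2 (r + 1), pow_mul, hxn,
        zero_pow (by norm_num)]
    have := (hTu.pow (2 * (r + 1))).ne_zero
    exact this hTn
  · -- c ≠ 0 : factor out the invertible scalar part
    set t : 𝔽 := c⁻¹ * μ with ht
    have htc : t * c = μ := by rw [ht, mul_comm, ← mul_assoc, mul_inv_cancel₀ hc, one_mul]
    set u1 : G 𝔽 p q r := 1 + t • eTop 𝔽 p q r with hu1d
    set u2 : G 𝔽 p q r := 1 + (-t) • eTop 𝔽 p q r with hu2d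
    have h12 : u1 * u2 = 1 := by
      rw [hu1d, hu2d, add_mul, mul_add, mul_add, one_mul, one_mul, mul_one,
        smul_mul_assoc, mul_smul_comm, smul_smul, hee, smul_zero, add_zero]
      rw [add_assoc, ← add_smul]
      simp
    have h21 : u2 * u1 = 1 := by
      rw [hu1d, hu2d, add_mul, mul_add, mul_add, one_mul, one_mul, mul_one,
        smul_mul_assoc, mul_smul_comm, smul_smul, hee, smul_zero, add_zero]
      rw [add_assoc, ← add_smul]
      simp
    set s : G 𝔽 p q r := algebraMap 𝔽 _ c + μ • eTop 𝔽 p q r with hs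
    set si : G 𝔽 p q r := u2 * algebraMap 𝔽 _ c⁻¹ with hsid
    have hs_eq : s = algebraMap 𝔽 _ c * u1 := by
      rw [hs, hu1d, mul_add, mul_one, mul_smul_comm, ← Algebra.smul_def, smul_smul, htc]
    have hssi : s * si = 1 := by
      rw [hs_eq, hsid, mul_assoc, ← mul_assoc u1, h12, one_mul, ← map_mul,
        mul_inv_cancel₀ hc, map_one]
    have hsis : si * s = 1 := by
      rw [hs_eq, hsid, mul_assoc, ← mul_assoc (algebraMap 𝔽 _ c⁻¹), ← map_mul,
        inv_mul_cancel₀ hc, map_one, one_mul, h21]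
    have hsu : IsUnit s := ⟨⟨s, si, hssi, hsis⟩, rfl⟩
    have hsiu : IsUnit si := ⟨⟨si, s, hsis, hssi⟩, rfl⟩
    set T : G 𝔽 p q r := algebraMap 𝔽 _ c + x + μ • eTop 𝔽 p q r with hT
    have hE : T * si = 1 + c⁻¹ • x := by
      have hTe : T * eTop 𝔽 p q r = c • eTop 𝔽 p q r := by
        rw [hT, add_mul, add_mul, hxe, smul_mul_assoc, hee, smul_zero, add_zero,
          add_zero, ← Algebra.smul_def]
      have hTu2 : T * u2 = algebraMap 𝔽 _ c + x := by
        rw [hu2d, mul_add, mul_one, mul_smul_comm, hTe, smul_smul, neg_mul, htc, hT,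
          add_assoc (algebraMap 𝔽 (G 𝔽 p q r) c + x), ← add_smul]
        simp
      rw [hsid, ← mul_assoc, hTu2, add_mul, ← map_mul, mul_inv_cancel₀ hc, map_one,
        ← Algebra.commutes, ← Algebra.smul_def]
    have hxeven : CliffordAlgebra.involute x = x := by
      have := hu2
      rw [mem_Geven_iff] at this
      rw [map_add, AlgHom.commutes] at this
      exact add_left_cancel this
    have hEmem : T * si ∈ Epm 𝔽 p q r := by
      rw [Epm_def]
      constructor
      · left
        rw [hE, map_add, map_one, map_smul, hxeven]
      · exact hTu.mul hsiu
    refine ⟨T * si, s, hEmem, ⟨?_, hsu⟩, ?_⟩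
    · rw [SetLike.mem_coe]
      apply Submodule.add_mem
      · apply Submodule.mem_sup_left
        rw [G0, Submodule.mem_span_singleton]
        exact ⟨c, (Algebra.algebraMap_eq_smul_one c).symm⟩
      · apply Submodule.mem_sup_right
        rw [Gn, Submodule.mem_span_singleton]
        exact ⟨μ, rfl⟩
    · rw [mul_assoc, hsis, mul_one]

end Aux

/-- `(𝒢^{(0)×} ∪ 𝒢^{(1)×}) Λ_r^{(0)×} = 𝒢^{(0)×} ∪ 𝒢^{(1)×}` and
`(𝒢^{(0)×} ∪ 𝒢^{(1)×})(Λ_r^{(0)} + 𝒢^n)^× = (𝒢^{(0)×} ∪ 𝒢^{(1)×})(𝒢^0 + 𝒢^n)^×`. -/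
theorem stmt7 (hn : 1 ≤ p + q + r) :
    Epm 𝔽 p q r * ux 𝔽 p q r ↑(Λr0 𝔽 p q r) = Epm 𝔽 p q r ∧
    Epm 𝔽 p q r * ux 𝔽 p q r ↑(Λr0 𝔽 p q r ⊔ Gn 𝔽 p q r)
      = Epm 𝔽 p q r * ux 𝔽 p q r ↑(G0 𝔽 p q r ⊔ Gn 𝔽 p q r) := by
  constructor
  · apply Set.Subset.antisymm
    · intro z hz
      obtain ⟨a, ha, b, ⟨hb1, hb2⟩, rfl⟩ := Set.mem_mul.mp hz
      have hbe : b ∈ Geven 𝔽 p q r := (Submodule.mem_inf.mp (SetLike.mem_coe.mp hb1)).2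
      exact Epm_mul ha (Or.inl ⟨hbe, hb2⟩)
    · intro z hz
      exact Set.mem_mul.mpr ⟨z, hz, 1, ⟨one_mem_Λr0, isUnit_one⟩, mul_one z⟩
  · rcases Nat.eq_zero_or_pos r with hr0 | hr
    · rw [Λr0_eq_G0_of_r_eq_zero hr0]
    · apply Set.Subset.antisymm
      · intro z hz
        obtain ⟨a, ha, b, ⟨hb1, hb2⟩, rfl⟩ := Set.mem_mul.mp hz
        obtain ⟨E, s, hE, hs, hbE⟩ := core_decomp hr hb2 (SetLike.mem_coe.mp hb1)
        exact Set.mem_mul.mpr ⟨a * E, Epm_mul ha hE, s, hs, by rw [hbE, ← mul_assoc]⟩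
      · apply Set.mul_subset_mul_left
        apply ux_mono
        exact SetLike.coe_subset_coe.mpr (sup_le_sup_right G0_le_Λr0 _)

end ClGA
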